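/- Let F be a field, V a 2-dimensional F-vector space, q : V → F a non-degenerate quadratic form and a ∈ F with a ≠ 0. If u, v ∈ V satisfy q(u) = a, q(v) = a and q(u + v) = 0, then u + v = 0. In particular, for the hyperbolic plane H over F, diam(G_{H,a}) ≥ 3. -/

import Mathlib

open QuadraticMap Module

/-- The representation graph `G_{q,a}`: vertices are the vectors of `V`, and distinct
`x, y` are adjacent iff `q (x - y) = a`. -/
def repGraph {F V : Type*} [Field F] [AddCommGroup V] [Module F V]
    (q : QuadraticForm F V) (a : F) : SimpleGraph V where
  Adj x y := x ≠ y ∧ q (x - y) = a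
  symm := by
    constructor
    rintro x y ⟨hxy, h⟩
    refine ⟨hxy.symm, ?_⟩
    rw [← neg_sub x y, QuadraticMap.map_neg]
    exact h
  loopless := by constructor; rintro x ⟨h, -⟩; exact h rfl

/-- The hyperbolic plane `H` on `F²`, i.e. the quadratic form `(x, y) ↦ x * y`. -/
noncomputable def hypPlane (F : Type*) [Field F] : QuadraticForm F (F × F) :=
  LinearMap.BilinMap.toQuadraticMap
    ((LinearMap.mul F F).compl₁₂ (LinearMap.fst F F F) (LinearMap.snd F F F))

theorem hypPlane_apply (F : Type*) [Field F] (v : F × F) : hypPlane F v = v.1 * v.2 := rfl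

/-- Key lemma: part 1 for general (F,V,q). -/
theorem key {F V : Type*} [Field F] [AddCommGroup V] [Module F V]
    (q : QuadraticForm F V) (hdim : Module.finrank F V = 2)
    (hnd : ∀ x : V, (∀ y : V, polar (⇑q) x y = 0) → x = 0)
    (a : F) (ha : a ≠ 0) :
    ∀ u v : V, q u = a → q v = a → q (u + v) = 0 → u + v = 0 := by
  intro u v hu hv huv
  have hu0 : u ≠ 0 := by rintro rfl; simp at hu; exact ha hu.symm
  by_cases hdep : ∃ c : F, c • u = v
  · obtain ⟨c, rfl⟩ := hdep
    have h2 : q ((1 + c) • u) = 0 := by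
      rw [add_smul, one_smul]; exact huv
    rw [QuadraticMap.map_smul, hu, smul_eq_mul] at h2
    have hc : (1 + c) = 0 := by
      rcases mul_eq_zero.mp h2 with h | h
      · exact mul_self_eq_zero.mp h
      · exact absurd h ha
    have : u + c • u = (1 + c) • u := by rw [add_smul, one_smul]
    rw [this, hc, zero_smul]
  · -- u, v linearly independent
    have hli : LinearIndependent F ![u, v] :=
      (LinearIndependent.pair_iff' hu0).mpr (fun c hc => hdep ⟨c, hc⟩)
    have hfd : FiniteDimensional F V := by
      apply FiniteDimensional.of_finrank_pos; omega
    have hspan : Submodule.span F {u, v} = ⊤ := by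
      have hr : Set.range ![u, v] = {u, v} := by
        ext x; simp [Fin.exists_fin_two, or_comm]
      apply Submodule.eq_top_of_finrank_eq
      rw [hdim, ← hr, finrank_span_eq_card hli]
      rfl
    have hpuv : polar (⇑q) u v = - (2 * a) := by
      have : polar (⇑q) u v = q (u + v) - q u - q v := by
        simp [polar]
      rw [this, hu, hv, huv]; ring
    have h1 : polar (⇑q) (u + v) u = 0 := by
      rw [polar_add_left, polar_self, polar_comm, hpuv, hu]
      simp [two_smul]; ring
    have h2 : polar (⇑q) (u + v) v = 0 := by
      rw [polar_add_left, polar_self, hpuv, hv]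
      simp [two_smul]; ring
    apply hnd
    intro y
    have hy : y ∈ Submodule.span F ({u, v} : Set V) := hspan ▸ Submodule.mem_top
    obtain ⟨s, t, rfl⟩ := Submodule.mem_span_pair.mp hy
    rw [polar_add_right, polar_smul_right, polar_smul_right, h1, h2]
    simp

/-- For a 2-dimensional non-degenerate quadratic form `q` and `a ≠ 0`, if `q u = q v = a`
and `q (u + v) = 0` then `u + v = 0`. In particular the representation graph of the
hyperbolic plane satisfies `diam G_{H,a} ≥ 3`. -/
theorem stmt_7 {F V : Type*} [Field F] [AddCommGroup V] [Module F V]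
    (q : QuadraticForm F V) (hdim : Module.finrank F V = 2)
    (hnd : ∀ x : V, (∀ y : V, polar (⇑q) x y = 0) → x = 0)
    (a : F) (ha : a ≠ 0) :
    (∀ u v : V, q u = a → q v = a → q (u + v) = 0 → u + v = 0) ∧
    3 ≤ (repGraph (hypPlane F) a).ediam := by
  refine ⟨key q hdim hnd a ha, ?_⟩
  -- the hyperbolic plane is non-degenerate of dimension 2
  have hdim' : Module.finrank F (F × F) = 2 := by simp
  have hnd' : ∀ x : F × F, (∀ y : F × F, polar (⇑(hypPlane F)) x y = 0) → x = 0 := by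
    intro x hx
    have h1 := hx (1, 0)
    have h2 := hx (0, 1)
    simp [polar, hypPlane_apply] at h1 h2
    have e1 : x.2 = 0 := by linear_combination h1
    have e2 : x.1 = 0 := by linear_combination h2
    exact Prod.ext e2 e1
  have hkey := key (hypPlane F) hdim' hnd' a ha
  -- show edist from 0 to (1,0) is ≥ 3
  have hne : ((1 : F), (0 : F)) ≠ (0 : F × F) := by
    simp [Prod.ext_iff]
  have hedist : 3 ≤ (repGraph (hypPlane F) a).edist 0 (1, 0) := by
    by_contra h
    push_neg at h
    have hlt : (repGraph (hypPlane F) a).edist 0 (1, 0) ≠ ⊤ := by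
      intro htop; rw [htop] at h; exact absurd h (by simp)
    obtain ⟨p, hp⟩ := SimpleGraph.exists_walk_of_edist_ne_top hlt
    have hplen : p.length < 3 := by
      have := hp ▸ h
      exact_mod_cast this
    have haux : ∀ (x y : F × F) (p : (repGraph (hypPlane F) a).Walk x y),
        x = 0 → y = (1, 0) → ¬ p.length < 3 := by
      intro x y p
      cases p with
      | nil =>
        intro hx hy
        subst hx
        exact absurd hy.symm hne
      | cons h1 q =>
        cases q with
        | nil =>
          intro hx hy _
          subst hx; subst hy
          obtain ⟨-, hq⟩ := h1
          rw [show ((0 : F × F) - (1, 0)) = (-1, 0) by simp [Prod.ext_iff]] at hq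
          rw [hypPlane_apply] at hq
          simp at hq
          exact ha hq.symm
        | cons h2 r =>
          cases r with
          | nil =>
            intro hx hy _
            subst hx; subst hy
            obtain ⟨-, hq1⟩ := h1
            obtain ⟨-, hq2⟩ := h2
            rename_i m
            have hu : hypPlane F m = a := by
              rw [show (0 - m : F × F) = -m by simp] at hq1
              rwa [QuadraticMap.map_neg] at hq1
            have hv : hypPlane F ((1, 0) - m) = a := by
              rw [← QuadraticMap.map_neg]; simpa [neg_sub] using hq2
            have h0 : hypPlane F (m + ((1, 0) - m)) = 0 := by
              simp [hypPlane_apply]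
            have := hkey m ((1, 0) - m) hu hv h0
            rw [add_sub_cancel] at this
            exact hne this
          | cons h3 s =>
            intro _ _ hlen
            simp [SimpleGraph.Walk.length_cons] at hlen
            omega
    exact haux _ _ p rfl rfl hplen
  calc (3 : ℕ∞) ≤ _ := hedist
    _ ≤ _ := SimpleGraph.edist_le_ediam
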